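/- Consider a run of the deterministic tree-gossip algorithm (Algorithm 4). No node is active at time L: for every node v and every G-neighbor w of v, we have w ∈ R L v. Hence Algorithm 4 performs at most ⌈log₂ n⌉ iterations and solves the 1-local broadcast problem. -/

import Mathlib

/-- A run of the deterministic tree-gossip algorithm
(Algorithm 4) has no active node at time `L = ⌈log₂ n⌉`: every node knows the
rumors of all of its `G`-neighbors after `L` iterations, i.e. Algorithm 4
performs at most `⌈log₂ n⌉` iterations and solves the 1-local broadcast
problem. -/
theorem algorithm4_solves_one_local_broadcast
    {V : Type*} [Fintype V] [DecidableEq V]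
    (G : SimpleGraph V)
    (hn : 2 ≤ Fintype.card V)
    (L : ℕ) (hL : L = Nat.clog 2 (Fintype.card V))
    (R : ℕ → V → Finset V) (u : ℕ → V → V) (τ : ℕ → V → Finset V)
    -- (1) initial knowledge and monotonicity
    (hR0 : ∀ v : V, R 0 v = {v})
    (hRmono : ∀ (t : ℕ) (v : V), R t v ⊆ R (t + 1) v)
    -- (2) every active node contacts a neighbor whose rumor it is missing
    (hu : ∀ (t : ℕ) (v : V), (∃ w, G.Adj v w ∧ w ∉ R t v) →
        G.Adj v (u t v) ∧ u t v ∉ R t v)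
    -- (3) contact trees
    (hτ0 : ∀ v : V, τ 0 v = {v})
    (hτact : ∀ (t : ℕ) (v : V), (∃ w, G.Adj v w ∧ w ∉ R t v) →
        τ (t + 1) v = τ t v ∪ τ t (u t v))
    (hτinact : ∀ (t : ℕ) (v : V), ¬ (∃ w, G.Adj v w ∧ w ∉ R t v) →
        τ (t + 1) v = τ t v)
    -- (4) symmetry of knowledge
    (hsym : ∀ (t : ℕ) (v w : V), w ∈ R t v ↔ v ∈ R t w)
    -- (5) active nodes with intersecting contact trees learn about each other
    (hmeet : ∀ (t : ℕ) (v w : V), (∃ x, G.Adj v x ∧ x ∉ R t v) →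
        (∃ x, G.Adj w x ∧ x ∉ R t w) →
        (τ (t + 1) v ∩ τ (t + 1) w).Nonempty → w ∈ R (t + 1) v) :
    ∀ v w : V, G.Adj v w → w ∈ R L v := by

  have hself : ∀ (t : ℕ) (v : V), v ∈ R t v := by
    intro t v
    induction t with
    | zero => simp [hR0]
    | succ t ih => exact hRmono t v ih
  have hu_active : ∀ (t : ℕ) (v : V), (∃ w, G.Adj v w ∧ w ∉ R t v) →
      (∃ w, G.Adj (u t v) w ∧ w ∉ R t (u t v)) := by
    intro t v hv
    obtain ⟨hadj, hnot⟩ := hu t v hv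
    exact ⟨v, hadj.symm, fun h => hnot ((hsym t v (u t v)).mpr h)⟩
  have hdrop : ∀ (t : ℕ) (v : V), (∃ w, G.Adj v w ∧ w ∉ R (t + 1) v) →
      (∃ w, G.Adj v w ∧ w ∉ R t v) := fun t v ⟨w, h1, h2⟩ =>
    ⟨w, h1, fun h => h2 (hRmono t v h)⟩
  have main : ∀ (t : ℕ) (v : V), (∃ w, G.Adj v w ∧ w ∉ R t v) →
      2 ^ (t + 1) ≤ (τ (t + 1) v).card := by
    intro t
    induction t with
    | zero =>
      intro v hv
      obtain ⟨hadj, hnot⟩ := hu 0 v hv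
      have hne : v ≠ u 0 v := fun h => hnot (h ▸ hself 0 v)
      rw [hτact 0 v hv, hτ0, hτ0,
        Finset.card_union_of_disjoint (by simp [hne.symm, hne])]
      simp
    | succ t ih =>
      intro v hv
      obtain ⟨hadj, hnot⟩ := hu (t + 1) v hv
      have hvA : ∃ w, G.Adj v w ∧ w ∉ R t v := hdrop t v hv
      have huA : ∃ w, G.Adj (u (t + 1) v) w ∧ w ∉ R t (u (t + 1) v) :=
        hdrop t _ (hu_active (t + 1) v hv)
      have hdisj : Disjoint (τ (t + 1) v) (τ (t + 1) (u (t + 1) v)) := by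
        by_contra h
        rw [Finset.not_disjoint_iff_nonempty_inter] at h
        exact hnot (hmeet t v (u (t + 1) v) hvA huA h)
      rw [hτact (t + 1) v hv, Finset.card_union_of_disjoint hdisj]
      calc 2 ^ (t + 2) = 2 ^ (t + 1) + 2 ^ (t + 1) := by ring
        _ ≤ _ := Nat.add_le_add (ih v hvA) (ih _ huA)
  intro v w hadj
  by_contra hw
  have h1 := main L v ⟨w, hadj, hw⟩
  have h2 : (τ (L + 1) v).card ≤ Fintype.card V := Finset.card_le_univ _
  have h3 : Fintype.card V ≤ 2 ^ L := hL ▸ Nat.le_pow_clog one_lt_two _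
  have h4 : 2 ^ (L + 1) ≤ 2 ^ L := h1.trans (h2.trans h3)
  exact absurd h4 (not_le.mpr (Nat.pow_lt_pow_right one_lt_two (Nat.lt_succ_self L)))
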